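/- For the double integrator ẋ₁ = x₂, ẋ₂ = u with non-symmetric control set u ∈ [1,2] and target {0}, the reachable set R(t) (backward, at time t) is convex for each t, but the union R_≤(t) = ∪_{0≤s≤t} R(s) is not convex for large t, and the family R(t) is not nested: there exist 0 < t₁ < t₂ with R(t₁) ⊄ R(t₂). -/

import Mathlib

set_option maxHeartbeats 1000000


open MeasureTheory Set

private lemma comp_II {E F : Type*} [NormedAddCommGroup E] [NormedSpace ℝ E]
    [NormedAddCommGroup F] [NormedSpace ℝ F] (L : E →L[ℝ] F) {f : ℝ → E} {a b : ℝ}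
    (h : IntervalIntegrable f volume a b) :
    IntervalIntegrable (fun x => L (f x)) volume a b :=
  ⟨L.integrable_comp h.1, L.integrable_comp h.2⟩

private lemma pair_int {f g : ℝ → ℝ} {a b : ℝ}
    (h : IntervalIntegrable (fun x => ((f x, g x) : ℝ × ℝ)) volume a b) :
    IntervalIntegrable f volume a b ∧ IntervalIntegrable g volume a b :=
  ⟨comp_II (ContinuousLinearMap.fst ℝ ℝ ℝ) h, comp_II (ContinuousLinearMap.snd ℝ ℝ ℝ) h⟩

private lemma pair_integral {f g : ℝ → ℝ} {a b : ℝ}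
    (h : IntervalIntegrable (fun x => ((f x, g x) : ℝ × ℝ)) volume a b) :
    (∫ x in a..b, ((f x, g x) : ℝ × ℝ)) = (∫ x in a..b, f x, ∫ x in a..b, g x) := by
  have h1 := (ContinuousLinearMap.fst ℝ ℝ ℝ).intervalIntegral_comp_comm h
  have h2 := (ContinuousLinearMap.snd ℝ ℝ ℝ).intervalIntegral_comp_comm h
  apply Prod.ext
  · exact h1.symm
  · exact h2.symm

/-- Bounds on the integrals of an admissible control. -/
private lemma control_bounds {s : ℝ} (hs : 0 ≤ s) {u : ℝ → ℝ}
    (hu : ∀ τ, u τ ∈ Icc (1 : ℝ) 2)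
    (hI : IntervalIntegrable (fun τ => (((s - τ) * u τ, u τ) : ℝ × ℝ)) volume 0 s) :
    s ≤ (∫ τ in (0 : ℝ)..s, u τ) ∧ (∫ τ in (0 : ℝ)..s, (s - τ) * u τ) ≤ s ^ 2 := by
  obtain ⟨hf, hg⟩ := pair_int hI
  constructor
  · have h1 : (∫ τ in (0 : ℝ)..s, (1 : ℝ)) ≤ ∫ τ in (0 : ℝ)..s, u τ := by
      apply intervalIntegral.integral_mono_on hs intervalIntegrable_const hg
      exact fun x _ => (hu x).1
    simpa using h1
  · have h2 : (∫ τ in (0 : ℝ)..s, (s - τ) * u τ) ≤ ∫ τ in (0 : ℝ)..s, 2 * (s - τ) := by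
      apply intervalIntegral.integral_mono_on hs hf
      · exact (Continuous.intervalIntegrable (by continuity) 0 s)
      · intro x hx
        have h1 : 0 ≤ s - x := by linarith [hx.2]
        nlinarith [(hu x).1, (hu x).2]
    have h3 : (∫ τ in (0 : ℝ)..s, 2 * (s - τ)) = s ^ 2 := by
      rw [intervalIntegral.integral_const_mul]
      rw [intervalIntegral.integral_sub intervalIntegrable_const
        intervalIntegral.intervalIntegrable_id]
      simp [integral_id]
      ring
    linarith

/-- Double integrator with non-symmetric control set `u ∈ [1,2]`, target `{0}`:
each backward reachable set `R(t)` is convex, the union `R_≤(t) = ⋃_{0≤s≤t} R(s)`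
is not convex for large `t`, and the family is not nested: there exist
`0 < t₁ < t₂` with `¬ R(t₁) ⊆ R(t₂)`. -/
theorem stmt18 (R : ℝ → Set (ℝ × ℝ))
    (hR : ∀ t : ℝ, R t = {x : ℝ × ℝ | ∃ u : ℝ → ℝ,
      (∀ τ, u τ ∈ Icc (1 : ℝ) 2) ∧
      IntervalIntegrable (fun τ => ((t - τ) * u τ, u τ)) volume 0 t ∧
      x = -(∫ τ in (0 : ℝ)..t, (((t - τ) * u τ, u τ) : ℝ × ℝ))}) :
    (∀ t : ℝ, Convex ℝ (R t)) ∧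
    (∃ t₀ : ℝ, 0 < t₀ ∧ ∀ t : ℝ, t₀ ≤ t → ¬ Convex ℝ (⋃ s ∈ Icc (0 : ℝ) t, R s)) ∧
    (∃ t₁ t₂ : ℝ, 0 < t₁ ∧ t₁ < t₂ ∧ ¬ R t₁ ⊆ R t₂) := by
  -- point membership with constant control 1
  have hone : ∀ t : ℝ, (-(t ^ 2 / 2), -t) ∈ R t := by
    intro t
    rw [hR t]
    refine ⟨fun _ => 1, fun τ => ⟨le_refl 1, one_le_two⟩, ?_, ?_⟩
    · exact Continuous.intervalIntegrable (by continuity) 0 t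
    · have hI : IntervalIntegrable (fun τ => (((t - τ) * 1, (1 : ℝ)) : ℝ × ℝ)) volume 0 t :=
        Continuous.intervalIntegrable (by continuity) 0 t
      rw [pair_integral hI]
      have h1 : (∫ τ in (0 : ℝ)..t, (t - τ) * 1) = t ^ 2 / 2 := by
        simp only [mul_one]
        rw [intervalIntegral.integral_sub intervalIntegrable_const
          intervalIntegral.intervalIntegrable_id]
        simp [integral_id]
        ring
      have h2 : (∫ τ in (0 : ℝ)..t, (1 : ℝ)) = t := by simp
      rw [h1, h2]
      simp [Prod.neg_mk]
  refine ⟨?_, ?_, ?_⟩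
  · -- convexity of each R t
    intro t
    rw [hR t]
    rintro x ⟨u, hu, hIu, hxu⟩ y ⟨v, hv, hIv, hyv⟩ a b ha hb hab
    refine ⟨fun τ => a * u τ + b * v τ, ?_, ?_, ?_⟩
    · intro τ
      exact (convex_Icc (1 : ℝ) 2) (hu τ) (hv τ) ha hb hab
    · have : (fun τ => (((t - τ) * (a * u τ + b * v τ), a * u τ + b * v τ) : ℝ × ℝ))
          = fun τ => a • (((t - τ) * u τ, u τ) : ℝ × ℝ) + b • (((t - τ) * v τ, v τ) : ℝ × ℝ) := by
        funext τ
        simp [Prod.ext_iff, Prod.smul_mk]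
        ring
      rw [this]
      have hIa : IntervalIntegrable (fun τ => a • (((t - τ) * u τ, u τ) : ℝ × ℝ)) volume 0 t :=
        hIu.smul a
      have hIb : IntervalIntegrable (fun τ => b • (((t - τ) * v τ, v τ) : ℝ × ℝ)) volume 0 t :=
        hIv.smul b
      exact hIa.add hIb
    · have heq : (fun τ => (((t - τ) * (a * u τ + b * v τ), a * u τ + b * v τ) : ℝ × ℝ))
          = fun τ => a • (((t - τ) * u τ, u τ) : ℝ × ℝ) + b • (((t - τ) * v τ, v τ) : ℝ × ℝ) := by
        funext τ
        simp [Prod.ext_iff, Prod.smul_mk]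
        ring
      have hIa : IntervalIntegrable (fun τ => a • (((t - τ) * u τ, u τ) : ℝ × ℝ)) volume 0 t :=
        hIu.smul a
      have hIb : IntervalIntegrable (fun τ => b • (((t - τ) * v τ, v τ) : ℝ × ℝ)) volume 0 t :=
        hIv.smul b
      rw [heq, intervalIntegral.integral_add hIa hIb,
        intervalIntegral.integral_smul, intervalIntegral.integral_smul]
      rw [hxu, hyv]
      rw [smul_neg, smul_neg, neg_add]
  · -- non-convexity of the union
    refine ⟨1, one_pos, ?_⟩
    intro t ht hconv
    -- points 0 ∈ R 0 and p = (-1/2, -1) ∈ R 1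
    have h0 : (0 : ℝ × ℝ) ∈ ⋃ s ∈ Icc (0 : ℝ) t, R s := by
      refine mem_biUnion ⟨le_refl 0, by linarith⟩ ?_
      have := hone 0
      simpa [Prod.mk_zero_zero] using this
    have hp : ((-(1 / 2 : ℝ), -1) : ℝ × ℝ) ∈ ⋃ s ∈ Icc (0 : ℝ) t, R s := by
      refine mem_biUnion ⟨zero_le_one, ht⟩ ?_
      have := hone 1
      norm_num at this ⊢
      convert this using 2
    have hq := hconv h0 hp (by norm_num : (0 : ℝ) ≤ (3 / 4 : ℝ))
      (by norm_num : (0 : ℝ) ≤ (1 / 4 : ℝ)) (by norm_num)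
    have hq' : ((-(1 / 8 : ℝ), -(1 / 4 : ℝ)) : ℝ × ℝ) ∈ ⋃ s ∈ Icc (0 : ℝ) t, R s := by
      convert hq using 1
      simp [Prod.ext_iff, Prod.smul_mk]
      norm_num
    obtain ⟨s, hs, hmem⟩ := mem_iUnion₂.1 hq'
    rw [hR s] at hmem
    obtain ⟨u, hu, hI, hx⟩ := hmem
    rw [pair_integral hI] at hx
    have hx1 : (-(1 / 8 : ℝ)) = -(∫ τ in (0 : ℝ)..s, (s - τ) * u τ) := congrArg Prod.fst hx
    have hx2 : (-(1 / 4 : ℝ)) = -(∫ τ in (0 : ℝ)..s, u τ) := congrArg Prod.snd hx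
    obtain ⟨hb1, hb2⟩ := control_bounds hs.1 hu hI
    have hs4 : s ≤ 1 / 4 := by
      have : (∫ τ in (0 : ℝ)..s, u τ) = 1 / 4 := by linarith [neg_injective hx2]
      linarith
    nlinarith [neg_injective hx1, hs.1]
  · -- non-nestedness
    refine ⟨1, 3, one_pos, by norm_num, ?_⟩
    intro hsub
    have hp1 : ((-(1 / 2 : ℝ), -1) : ℝ × ℝ) ∈ R 1 := by
      have := hone 1
      norm_num at this ⊢
      convert this using 2
    have hp2 := hsub hp1
    rw [hR 3] at hp2
    obtain ⟨u, hu, hI, hx⟩ := hp2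
    rw [pair_integral hI] at hx
    have hx2 : (-(1 : ℝ)) = -(∫ τ in (0 : ℝ)..3, u τ) := congrArg Prod.snd hx
    obtain ⟨hb1, _⟩ := control_bounds (by norm_num : (0:ℝ) ≤ 3) hu hI
    have := neg_injective hx2
    linarith
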